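/- Let G be a regular caterpillar with an odd number s = 2k+1 of spine vertices, each spine vertex having exactly Δ ≥ 1 legs, so that G has n = (2k+1)(Δ+1) vertices. Then the differential chromatic number of G is at most ⌈(n − Δ)/2⌉. -/

import Mathlib

/-- A labeling of the vertices of a finite graph on `n` vertices: a one-to-one
assignment of the numbers `1, …, n` to the vertices. -/
def IsLabeling {V : Type*} [Fintype V] (c : V → ℕ) : Prop :=
  Function.Injective c ∧ ∀ v, c v ∈ Finset.Icc 1 (Fintype.card V)

/-- The differential value of the labeling `c` is at least `d`: every edge has
label difference at least `d`. -/
def DiffValAtLeast {V : Type*} (G : SimpleGraph V) (c : V → ℕ) (d : ℕ) : Prop :=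
  ∀ u v, G.Adj u v → d ≤ Nat.dist (c u) (c v)

/-- The differential chromatic number: the maximum, over all labelings, of the
minimum label difference over the edges. -/
noncomputable def diffChromNum {V : Type*} [Fintype V] (G : SimpleGraph V) : ℕ :=
  sSup {d : ℕ | ∃ c : V → ℕ, IsLabeling c ∧ DiffValAtLeast G c d}

/-- The regular caterpillar with spine vertices `(i, 0)` for `i : Fin s` forming a
path, each spine vertex `(i, 0)` adjacent to its `Δ` legs `(i, j)`, `j ≠ 0`. -/
def regularCaterpillar (s Δ : ℕ) : SimpleGraph (Fin s × Fin (Δ + 1)) :=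
  SimpleGraph.fromRel (fun a b =>
    (a.2 = 0 ∧ b.2 = 0 ∧ (a.1 : ℕ) + 1 = (b.1 : ℕ)) ∨
    (a.1 = b.1 ∧ a.2 = 0 ∧ b.2 ≠ 0))

/-- A regular caterpillar with an odd number `s = 2k+1` of spine vertices and
`Δ ≥ 1` legs per spine vertex, on `n = (2k+1)(Δ+1)` vertices, has differential
chromatic number at most `⌈(n − Δ)/2⌉`. -/
theorem stmt_1 (k Δ : ℕ) (hΔ : 1 ≤ Δ) :
    diffChromNum (regularCaterpillar (2 * k + 1) Δ) ≤
      ((2 * k + 1) * (Δ + 1) - Δ + 1) / 2 := by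
  classical
  apply csSup_le'
  rintro d ⟨c, ⟨hinj, hmem⟩, hdiff⟩
  obtain ⟨K, hK⟩ : ∃ K, K = k * Δ := ⟨_, rfl⟩
  obtain ⟨n, hn⟩ : ∃ n, n = 2*K + 2*k + Δ + 1 := ⟨_, rfl⟩
  have hnK : (2*k+1)*(Δ+1) = n := by rw [hn, hK]; ring
  have hcard2 : Fintype.card (Fin (2 * k + 1) × Fin (Δ + 1)) = n := by
    simp [hnK]
  suffices hgoal : d ≤ K + k + 1 by rw [hnK]; omega
  by_contra hcon
  push_neg at hcon
  -- basic facts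
  have hmem' : ∀ v : Fin (2*k+1) × Fin (Δ+1), 1 ≤ c v ∧ c v ≤ n := by
    intro v
    have h := hmem v
    rw [Finset.mem_Icc, hcard2] at h
    exact h
  have hdist : ∀ a b : ℕ, Nat.dist a b = (a - b) + (b - a) := fun a b => rfl
  have hadj : ∀ (i : Fin (2*k+1)) (j : Fin (Δ+1)), j ≠ 0 →
      (regularCaterpillar (2*k+1) Δ).Adj (i, 0) (i, j) := by
    intro i j hj
    have : regularCaterpillar (2*k+1) Δ = SimpleGraph.fromRel (fun a b =>
      (a.2 = 0 ∧ b.2 = 0 ∧ (a.1 : ℕ) + 1 = (b.1 : ℕ)) ∨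
      (a.1 = b.1 ∧ a.2 = 0 ∧ b.2 ≠ 0)) := rfl
    rw [this, SimpleGraph.fromRel_adj]
    refine ⟨?_, Or.inl (Or.inr ⟨rfl, rfl, hj⟩)⟩
    intro h
    exact hj ((Prod.ext_iff.mp h).2).symm
  have hd0 : ∀ (i : Fin (2*k+1)) (j : Fin (Δ+1)), j ≠ 0 →
      d ≤ Nat.dist (c (i, 0)) (c (i, j)) := fun i j hj => hdiff _ _ (hadj i j hj)
  -- d is small
  have hdn : d ≤ n - 1 := by
    have hj1 : (⟨1, by omega⟩ : Fin (Δ+1)) ≠ 0 := by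
      intro h
      have := congrArg Fin.val h
      simp at this
    have h5 := hd0 0 _ hj1
    rw [hdist] at h5
    have h6 := hmem' (0, (0 : Fin (Δ+1)))
    have h7 := hmem' (0, ⟨1, by omega⟩)
    omega
  -- star counting at each spine vertex
  have hstar : ∀ i : Fin (2*k+1),
      Δ ≤ (c (i,0) - d) + (n + 1 - (c (i,0) + d)) := by
    intro i
    have hinj2 : Set.InjOn (fun j : Fin (Δ+1) => c (i, j))
        ↑(Finset.univ.filter (fun j : Fin (Δ+1) => j ≠ 0)) :=
      fun a _ b _ h => (Prod.ext_iff.mp (hinj h)).2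
    have hcardlegs : (Finset.univ.filter (fun j : Fin (Δ+1) => j ≠ 0)).card = Δ := by
      have he : (Finset.univ.filter (fun j : Fin (Δ+1) => j ≠ 0)) =
          Finset.univ.erase 0 := by
        ext j; simp [Finset.mem_erase, and_comm]
      rw [he, Finset.card_erase_of_mem (Finset.mem_univ _), Finset.card_univ,
        Fintype.card_fin]
      omega
    have himg : ((Finset.univ.filter (fun j : Fin (Δ+1) => j ≠ 0)).image
        (fun j => c (i,j))) ⊆
        Finset.Icc 1 (c (i,0) - d) ∪ Finset.Icc (c (i,0) + d) n := by
      intro x hx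
      rw [Finset.mem_image] at hx
      obtain ⟨j, hj, rfl⟩ := hx
      rw [Finset.mem_filter] at hj
      have h5 := hd0 i j hj.2
      rw [hdist] at h5
      have h6 := hmem' (i, j)
      have h7 := hmem' (i, (0 : Fin (Δ+1)))
      rw [Finset.mem_union, Finset.mem_Icc, Finset.mem_Icc]
      omega
    calc Δ = ((Finset.univ.filter (fun j : Fin (Δ+1) => j ≠ 0)).image
          (fun j => c (i,j))).card := by
          rw [Finset.card_image_of_injOn hinj2, hcardlegs]
      _ ≤ (Finset.Icc 1 (c (i,0) - d) ∪ Finset.Icc (c (i,0) + d) n).card :=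
          Finset.card_le_card himg
      _ ≤ (Finset.Icc 1 (c (i,0) - d)).card + (Finset.Icc (c (i,0) + d) n).card :=
          Finset.card_union_le _ _
      _ ≤ (c (i,0) - d) + (n + 1 - (c (i,0) + d)) := by
          rw [Nat.card_Icc, Nat.card_Icc]; omega
  -- dichotomy
  have hdich : ∀ i : Fin (2*k+1),
      (n + 2 ≤ c (i,0) + d ∧ d + Δ ≤ c (i,0)) ∨
      (c (i,0) + 1 ≤ d ∧ c (i,0) + d + Δ ≤ n + 1) := by
    intro i
    have h1 := hstar i
    have h2 := hmem' (i, (0 : Fin (Δ+1)))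
    omega
  -- alternation
  have halt : ∀ i j : Fin (2*k+1), (i:ℕ) + 1 = (j:ℕ) →
      (n + 2 ≤ c (j,0) + d ↔ ¬ (n + 2 ≤ c (i,0) + d)) := by
    intro i j hij
    have hadj2 : (regularCaterpillar (2*k+1) Δ).Adj (i, 0) (j, 0) := by
      have : regularCaterpillar (2*k+1) Δ = SimpleGraph.fromRel (fun a b =>
        (a.2 = 0 ∧ b.2 = 0 ∧ (a.1 : ℕ) + 1 = (b.1 : ℕ)) ∨
        (a.1 = b.1 ∧ a.2 = 0 ∧ b.2 ≠ 0)) := rfl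
      rw [this, SimpleGraph.fromRel_adj]
      refine ⟨?_, Or.inl (Or.inl ⟨rfl, rfl, hij⟩)⟩
      intro h
      have h2 : (i:ℕ) = (j:ℕ) := congrArg (fun p : Fin (2*k+1) × Fin (Δ+1) => (p.1:ℕ)) h
      omega
    have hdd := hdiff _ _ hadj2
    rw [hdist] at hdd
    have d1 := hdich i
    have d2 := hdich j
    have e1 := hmem' (i, (0 : Fin (Δ+1)))
    have e2 := hmem' (j, (0 : Fin (Δ+1)))
    omega
  -- parity classification
  have key : ∀ i : Fin (2*k+1),
      (n + 2 ≤ c (i,0) + d ↔ (Even (i:ℕ) ↔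
        n + 2 ≤ c ((0 : Fin (2*k+1)), (0 : Fin (Δ+1))) + d)) := by
    intro i
    induction i using Fin.induction with
    | zero => simp
    | succ p ih =>
      have h1 := halt p.castSucc p.succ (by simp)
      rw [Fin.coe_castSucc] at ih
      rw [Fin.val_succ, Nat.even_add_one]
      tauto
  -- bound on the "even spine or odd leg" set
  have hev : (Finset.univ.filter (fun i : Fin (2*k+1) => Even (i:ℕ))).card ≤ k + 1 := by
    have h : (Finset.univ.filter (fun i : Fin (2*k+1) => Even (i:ℕ))).card ≤
        (Finset.range (k+1)).card := by
      apply Finset.card_le_card_of_injOn (fun i : Fin (2*k+1) => (i:ℕ)/2)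
      · intro i hi
        simp only [Finset.mem_coe, Finset.mem_range]
        have := i.isLt
        omega
      · intro a ha b hb hab
        rw [Finset.coe_filter, Set.mem_setOf_eq] at ha hb
        obtain ⟨x, hx⟩ := ha.2
        obtain ⟨y, hy⟩ := hb.2
        apply Fin.val_injective
        simp only at hab
        omega
    simpa using h
  have hodd : (Finset.univ.filter (fun i : Fin (2*k+1) => ¬ Even (i:ℕ))).card ≤ k := by
    have h : (Finset.univ.filter (fun i : Fin (2*k+1) => ¬ Even (i:ℕ))).card ≤
        (Finset.range k).card := by
      apply Finset.card_le_card_of_injOn (fun i : Fin (2*k+1) => (i:ℕ)/2)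
      · intro i hi
        simp only [Finset.mem_coe, Finset.mem_range]
        rw [Finset.mem_coe, Finset.mem_filter, Nat.not_even_iff] at hi
        have := i.isLt
        omega
      · intro a ha b hb hab
        rw [Finset.coe_filter, Set.mem_setOf_eq, Nat.not_even_iff] at ha hb
        apply Fin.val_injective
        simp only at hab
        omega
    simpa using h
  set E := Finset.univ.filter (fun v : Fin (2*k+1) × Fin (Δ+1) =>
      (Even (v.1:ℕ) ∧ v.2 = 0) ∨ (¬ Even (v.1:ℕ) ∧ v.2 ≠ 0)) with hEdef
  have hEcard : E.card ≤ k + 1 + K := by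
    have hsub : E ⊆
        ((Finset.univ.filter (fun i : Fin (2*k+1) => Even (i:ℕ))).image
          (fun i => (i, (0 : Fin (Δ+1))))) ∪
        ((Finset.univ.filter (fun i : Fin (2*k+1) => ¬ Even (i:ℕ))) ×ˢ
          (Finset.univ.filter (fun j : Fin (Δ+1) => j ≠ 0))) := by
      intro v hv
      rw [hEdef, Finset.mem_filter] at hv
      rw [Finset.mem_union]
      rcases hv.2 with ⟨he, hz⟩ | ⟨he, hz⟩
      · left
        rw [Finset.mem_image]
        exact ⟨v.1, Finset.mem_filter.mpr ⟨Finset.mem_univ _, he⟩, by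
          rw [← hz]⟩
      · right
        rw [Finset.mem_product]
        exact ⟨Finset.mem_filter.mpr ⟨Finset.mem_univ _, he⟩,
          Finset.mem_filter.mpr ⟨Finset.mem_univ _, hz⟩⟩
    have hlegs : (Finset.univ.filter (fun j : Fin (Δ+1) => j ≠ 0)).card = Δ := by
      have he : (Finset.univ.filter (fun j : Fin (Δ+1) => j ≠ 0)) =
          Finset.univ.erase 0 := by
        ext j; simp [Finset.mem_erase, and_comm]
      rw [he, Finset.card_erase_of_mem (Finset.mem_univ _), Finset.card_univ,
        Fintype.card_fin]
      omega
    calc E.card ≤ _ := Finset.card_le_card hsub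
      _ ≤ _ + _ := Finset.card_union_le _ _
      _ ≤ (k+1) + K := by
        apply add_le_add
        · exact le_trans Finset.card_image_le hev
        · rw [Finset.card_product, hlegs, hK]
          exact Nat.mul_le_mul_right _ hodd
  -- surjectivity of labels
  have himage : Finset.univ.image c = Finset.Icc 1 n := by
    apply Finset.eq_of_subset_of_card_le
    · intro x hx
      rw [Finset.mem_image] at hx
      obtain ⟨v, -, rfl⟩ := hx
      rw [Finset.mem_Icc]
      exact hmem' v
    · rw [Finset.card_image_of_injective _ hinj, Finset.card_univ, hcard2, Nat.card_Icc]
      omega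
  -- final counting, two symmetric cases
  by_cases H0 : n + 2 ≤ c ((0 : Fin (2*k+1)), (0 : Fin (Δ+1))) + d
  · have hTsub : Finset.Icc (n-d+1) n ⊆
        (Finset.univ.filter (fun v => n-d+1 ≤ c v)).image c := by
      intro x hx
      rw [Finset.mem_Icc] at hx
      have hx' : x ∈ Finset.univ.image c := by
        rw [himage, Finset.mem_Icc]; omega
      rw [Finset.mem_image] at hx'
      obtain ⟨v, -, rfl⟩ := hx'
      rw [Finset.mem_image]
      exact ⟨v, Finset.mem_filter.mpr ⟨Finset.mem_univ _, hx.1⟩, rfl⟩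
    have hSE : (Finset.univ.filter (fun v => n-d+1 ≤ c v)) ⊆ E := by
      intro v hv
      obtain ⟨i, j⟩ := v
      rw [Finset.mem_filter] at hv
      have hcv := hv.2
      rw [hEdef, Finset.mem_filter]
      refine ⟨Finset.mem_univ _, ?_⟩
      by_cases hj : j = 0
      · subst hj
        by_cases he : Even (i:ℕ)
        · exact Or.inl ⟨he, rfl⟩
        · exfalso
          have hk2 := key i
          have hnh : ¬ (n+2 ≤ c (i,0)+d) := by tauto
          have h8 := hdich i
          omega
      · by_cases he : Even (i:ℕ)
        · exfalso
          have hk2 := key i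
          have hh : n+2 ≤ c (i,0)+d := by tauto
          have h5 := hd0 i j hj
          rw [hdist] at h5
          have h6 := hmem' (i, (0 : Fin (Δ+1)))
          have h7 := hmem' (i, j)
          omega
        · exact Or.inr ⟨he, hj⟩
    have hfin : d ≤ E.card :=
      calc d = (Finset.Icc (n-d+1) n).card := by rw [Nat.card_Icc]; omega
        _ ≤ ((Finset.univ.filter (fun v => n-d+1 ≤ c v)).image c).card :=
            Finset.card_le_card hTsub
        _ ≤ (Finset.univ.filter (fun v => n-d+1 ≤ c v)).card := Finset.card_image_le
        _ ≤ E.card := Finset.card_le_card hSE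
    omega
  · have hTsub : Finset.Icc 1 d ⊆
        (Finset.univ.filter (fun v => c v ≤ d)).image c := by
      intro x hx
      rw [Finset.mem_Icc] at hx
      have hx' : x ∈ Finset.univ.image c := by
        rw [himage, Finset.mem_Icc]; omega
      rw [Finset.mem_image] at hx'
      obtain ⟨v, -, rfl⟩ := hx'
      rw [Finset.mem_image]
      exact ⟨v, Finset.mem_filter.mpr ⟨Finset.mem_univ _, hx.2⟩, rfl⟩
    have hSE : (Finset.univ.filter (fun v => c v ≤ d)) ⊆ E := by
      intro v hv
      obtain ⟨i, j⟩ := v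
      rw [Finset.mem_filter] at hv
      have hcv := hv.2
      rw [hEdef, Finset.mem_filter]
      refine ⟨Finset.mem_univ _, ?_⟩
      by_cases hj : j = 0
      · subst hj
        by_cases he : Even (i:ℕ)
        · exact Or.inl ⟨he, rfl⟩
        · exfalso
          have hk2 := key i
          have hh : n+2 ≤ c (i,0)+d := by tauto
          have h8 := hdich i
          omega
      · by_cases he : Even (i:ℕ)
        · exfalso
          have hk2 := key i
          have hnh : ¬ (n+2 ≤ c (i,0)+d) := by tauto
          have h8 := hdich i
          have h5 := hd0 i j hj
          rw [hdist] at h5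
          have h6 := hmem' (i, (0 : Fin (Δ+1)))
          have h7 := hmem' (i, j)
          omega
        · exact Or.inr ⟨he, hj⟩
    have hfin : d ≤ E.card :=
      calc d = (Finset.Icc 1 d).card := by rw [Nat.card_Icc]; omega
        _ ≤ ((Finset.univ.filter (fun v => c v ≤ d)).image c).card :=
            Finset.card_le_card hTsub
        _ ≤ (Finset.univ.filter (fun v => c v ≤ d)).card := Finset.card_image_le
        _ ≤ E.card := Finset.card_le_card hSE
    omega
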